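/- arXiv:2502.04952 — 4 statements merged into one kernel-verified Lean document; each statement's English description precedes it below -/
import Mathlib

section
/- Let V be a type, r : V → V → Prop, and S, T sets of vertices. For every pair of vertices u, v, the following are equivalent: (1) the two-element list [u, v] is an infix of some nonempty r-chain whose first element lies in S and whose last element lies in T; (2) r u v holds, there exists s ∈ S with s →* u, and there exists t ∈ T with v →* t. -/
lemma chain'_reflTransGen_head_getLast {V : Type*} {r : V → V → Prop}
    {l : List V} (hc : List.Chain' r l) (hl : l ≠ []) :
    Relation.ReflTransGen r (l.head hl) (l.getLast hl) := by
  obtain ⟨a, t, rfl⟩ := List.exists_cons_of_ne_nil hl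
  exact List.relationReflTransGen_of_exists_isChain_cons t hc rfl

/-- The edge `[u, v]` lies on some source-sink chain iff `r u v` holds,
`u` is reachable from a source, and `v` reaches a sink. -/
theorem edge_infix_sourceSinkChain_iff {V : Type*} (r : V → V → Prop)
    (S T : Set V) (u v : V) :
    (∃ (l : List V) (hl : l ≠ []),
        List.Chain' r l ∧ l.head hl ∈ S ∧ l.getLast hl ∈ T ∧
        List.IsInfix [u, v] l) ↔
    (r u v ∧ (∃ s ∈ S, Relation.ReflTransGen r s u) ∧
     (∃ t ∈ T, Relation.ReflTransGen r v t)) := by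
  constructor
  · rintro ⟨l, hl, hc, hS, hT, ⟨a, b, rfl⟩⟩
    have hsplit : a ++ [u, v] ++ b = (a ++ [u]) ++ (v :: b) := by simp
    rw [hsplit, List.Chain', List.isChain_append] at hc
    obtain ⟨hc1, hc2, hlink⟩ := hc
    have huv : r u v :=
      hlink u (by simp [List.getLast?_append]) v (by simp)
    refine ⟨huv, ?_, ?_⟩
    · refine ⟨(a ++ [u]).head (by simp), ?_, ?_⟩
      · have he : (a ++ [u, v] ++ b).head hl = (a ++ [u]).head (by simp) := by
          rcases a with _ | ⟨c, a'⟩ <;> simp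
        rwa [he] at hS
      · have h1 := chain'_reflTransGen_head_getLast hc1 (by simp)
        rwa [List.getLast_append_singleton] at h1
    · refine ⟨(v :: b).getLast (by simp), ?_, ?_⟩
      · have he : (a ++ [u, v] ++ b).getLast hl = (v :: b).getLast (by simp) := by
          rw [List.getLast_congr _ (by simp) hsplit, List.getLast_append_of_ne_nil _ (by simp)]
        rwa [he] at hT
      · have h2 := chain'_reflTransGen_head_getLast hc2 (by simp)
        simpa using h2
  · rintro ⟨huv, ⟨s, hs, hsu⟩, ⟨t, ht, hvt⟩⟩
    obtain ⟨l1, hc1, hlast1⟩ := List.exists_isChain_cons_of_relationReflTransGen hsu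
    obtain ⟨l2, hc2, hlast2⟩ := List.exists_isChain_cons_of_relationReflTransGen hvt
    refine ⟨(s :: l1) ++ (v :: l2), by simp, ?_, ?_, ?_, ?_⟩
    · rw [List.Chain', List.isChain_append]
      refine ⟨hc1, hc2, ?_⟩
      intro x hx y hy
      simp only [List.head?_cons, Option.mem_def, Option.some.injEq] at hy
      rw [List.getLast?_eq_getLast (by simp), Option.mem_def, Option.some.injEq] at hx
      subst hy
      rw [← hx, hlast1]
      exact huv
    · rwa [List.head_append_of_ne_nil (by simp)]
    · rwa [List.getLast_append_of_ne_nil _ (by simp), hlast2]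
    · refine ⟨(s :: l1).dropLast, l2, ?_⟩
      have hd : (s :: l1).dropLast ++ [u] = s :: l1 := by
        rw [← hlast1]; exact List.dropLast_append_getLast _
      calc (s :: l1).dropLast ++ [u, v] ++ l2
          = ((s :: l1).dropLast ++ [u]) ++ (v :: l2) := by simp
        _ = (s :: l1) ++ (v :: l2) := by rw [hd]
end

section
/- Let V be a type, r : V → V → Prop, and S, T sets of vertices; let V^N = {v | (∃ s ∈ S, s →* v) ∧ (∃ t ∈ T, v →* t)}. Let π be a nonempty list of vertices such that neither its first element nor its last element is in V^N. Then π is not an infix of any source-sink chain, and consequently the set of source-sink chains is unchanged by discarding π: the set of nonempty r-chains with first element in S and last element in T equals the set of such chains that do not contain π as an infix. -/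
private lemma chain'_head_reaches {V : Type*} {r : V → V → Prop} :
    ∀ (l : List V) (h : l ≠ []) (v : V), List.Chain' r l → v ∈ l →
      Relation.ReflTransGen r (l.head h) v
  | a :: t, _, v, hc, hv => by
    rcases List.mem_cons.mp hv with rfl | hv
    · exact Relation.ReflTransGen.refl
    · have ht : t ≠ [] := List.ne_nil_of_mem hv
      have := chain'_head_reaches t ht v hc.tail hv
      refine Relation.ReflTransGen.head ?_ this
      have := hc.rel_head? (y := t.head ht)
      simp [List.head?_eq_head ht] at this
      exact this

private lemma chain'_reaches_last {V : Type*} {r : V → V → Prop} :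
    ∀ (l : List V) (h : l ≠ []) (v : V), List.Chain' r l → v ∈ l →
      Relation.ReflTransGen r v (l.getLast h)
  | a :: t, _, v, hc, hv => by
    rcases List.eq_nil_or_concat t with rfl | _
    · simp at hv; subst hv; exact Relation.ReflTransGen.refl
    · have ht : t ≠ [] := by rintro rfl; simp_all
      rw [List.getLast_cons ht]
      rcases List.mem_cons.mp hv with rfl | hv
      · have hr : r v (t.head ht) := by
          have := hc.rel_head? (y := t.head ht)
          simp [List.head?_eq_head ht] at this
          exact this
        exact Relation.ReflTransGen.head hr
          (chain'_reaches_last t ht _ hc.tail (List.head_mem ht))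
      · exact chain'_reaches_last t ht v hc.tail hv


/-- A list is a source-sink chain for `r`, `S`, `T` if it is a nonempty
`r`-chain whose first element lies in `S` and whose last element lies in `T`. -/
def IsSourceSinkChain {V : Type*} (r : V → V → Prop) (S T : Set V)
    (l : List V) : Prop :=
  ∃ hl : l ≠ [], List.Chain' r l ∧ l.head hl ∈ S ∧ l.getLast hl ∈ T

/-- Path-contribution part of the soundness theorem: a nonempty list both of
whose endpoints lie outside `V^N` is an infix of no source-sink chain, and
discarding it leaves the set of source-sink chains unchanged. -/
theorem discard_noncontributing_summary_sound {V : Type*} (r : V → V → Prop)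
    (S T : Set V) (VN : Set V)
    (hVN : VN = {v | (∃ s ∈ S, Relation.ReflTransGen r s v) ∧
                     (∃ t ∈ T, Relation.ReflTransGen r v t)})
    (π : List V) (hπ : π ≠ [])
    (hhead : π.head hπ ∉ VN) (hlast : π.getLast hπ ∉ VN) :
    (¬ ∃ l : List V, IsSourceSinkChain r S T l ∧ List.IsInfix π l) ∧
    ({l : List V | IsSourceSinkChain r S T l} =
      {l : List V | IsSourceSinkChain r S T l ∧ ¬ List.IsInfix π l}) := by
  have key : ¬ ∃ l : List V, IsSourceSinkChain r S T l ∧ List.IsInfix π l := by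
    rintro ⟨l, ⟨hl, hchain, hS, hT⟩, hinf⟩
    have hmem : π.head hπ ∈ l := hinf.subset (List.head_mem hπ)
    apply hhead
    rw [hVN]
    exact ⟨⟨l.head hl, hS, chain'_head_reaches l hl _ hchain hmem⟩,
      ⟨l.getLast hl, hT, chain'_reaches_last l hl _ hchain hmem⟩⟩
  refine ⟨key, ?_⟩
  ext l
  simp only [Set.mem_setOf_eq, iff_self_and]
  exact fun hl hinf => key ⟨l, hl, hinf⟩
end

section
/- Let V and Γ be types, r : V → V → Prop, lab : V → V → Option Γ an edge labeling, and S, T sets of vertices. Define the set of necessary guards G = {g : Γ | ∃ u v, r u v ∧ lab u v = some g ∧ (∃ s ∈ S, s →* u) ∧ (∃ t ∈ T, v →* t)}, and define V^N = {v | (∃ s ∈ S, s →* v) ∧ (∃ t ∈ T, v →* t)} ∪ {v | ∃ g ∈ G, ∃ u w, r u w ∧ lab u w = some g ∧ v →* u}. If π is a nonempty list of vertices such that neither its first element nor its last element lies in V^N, then: (i) π is not an infix of any nonempty r-chain with first element in S and last element in T, and (ii) there is no g ∈ G and edge (u,w) with r u w and lab u w = some g such that both the first and the last element of π reach u. -/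
private lemma chainAuxHead {V : Type*} {r : V → V → Prop} :
    ∀ (l : List V) (_ : List.Chain' r l) (v : V) (_ : v ∈ l) (hl : l ≠ []),
      Relation.ReflTransGen r (l.head hl) v := by
  intro l
  induction l with
  | nil => simp
  | cons x xs ih =>
    intro hc v hv _
    simp only [List.mem_cons] at hv
    rcases hv with rfl | hv
    · exact Relation.ReflTransGen.refl
    · have hxs : xs ≠ [] := List.ne_nil_of_mem hv
      obtain ⟨y, ys, rfl⟩ := List.exists_cons_of_ne_nil hxs
      have hxy : r x y := (List.isChain_cons_cons.mp hc).1
      have := ih (List.isChain_cons_cons.mp hc).2 v hv hxs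
      exact Relation.ReflTransGen.head hxy this

private lemma chainAuxLast {V : Type*} {r : V → V → Prop} :
    ∀ (l : List V) (_ : List.Chain' r l) (v : V) (_ : v ∈ l) (hl : l ≠ []),
      Relation.ReflTransGen r v (l.getLast hl) := by
  intro l
  induction l with
  | nil => simp
  | cons x xs ih =>
    intro hc v hv _
    match xs, hc, hv with
    | [], _, hv =>
      simp only [List.mem_singleton] at hv
      subst hv; exact Relation.ReflTransGen.refl
    | y :: ys, hc, hv =>
      have hxs : (y :: ys : List V) ≠ [] := by simp
      rw [List.getLast_cons hxs]
      simp only [List.mem_cons] at hv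
      rcases hv with rfl | hv
      · have hxy : r v y := (List.isChain_cons_cons.mp hc).1
        have := ih (List.isChain_cons_cons.mp hc).2 y (by simp) hxs
        exact Relation.ReflTransGen.head hxy this
      · exact ih (List.isChain_cons_cons.mp hc).2 v (List.mem_cons.mpr hv) hxs

/-- Full soundness theorem: a nonempty list both of whose endpoints lie
outside the combined necessary-vertex set has neither path contribution
(it is an infix of no source-sink chain) nor condition contribution
(it instantiates no necessary guard). -/
theorem soundness_no_path_no_condition_contribution
    {V Γ : Type*} (r : V → V → Prop) (lab : V → V → Option Γ)
    (S T : Set V) (G : Set Γ)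
    (hG : G = {g : Γ | ∃ u v, r u v ∧ lab u v = some g ∧
                 (∃ s ∈ S, Relation.ReflTransGen r s u) ∧
                 (∃ t ∈ T, Relation.ReflTransGen r v t)})
    (VN : Set V)
    (hVN : VN = {v | (∃ s ∈ S, Relation.ReflTransGen r s v) ∧
                     (∃ t ∈ T, Relation.ReflTransGen r v t)} ∪
                {v | ∃ g ∈ G, ∃ u w, r u w ∧ lab u w = some g ∧
                     Relation.ReflTransGen r v u})
    (π : List V) (hπ : π ≠ [])
    (hhead : π.head hπ ∉ VN) (hlast : π.getLast hπ ∉ VN) :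
    (¬ ∃ (l : List V) (hl : l ≠ []),
        List.Chain' r l ∧ l.head hl ∈ S ∧ l.getLast hl ∈ T ∧
        List.IsInfix π l) ∧
    (¬ ∃ g ∈ G, ∃ u w, r u w ∧ lab u w = some g ∧
        Relation.ReflTransGen r (π.head hπ) u ∧
        Relation.ReflTransGen r (π.getLast hπ) u) := by
  constructor
  · rintro ⟨l, hl, hc, hS, hT, hinf⟩
    apply hhead
    rw [hVN]
    left
    have hmem : π.head hπ ∈ l := hinf.subset (List.head_mem hπ)
    constructor
    · exact ⟨l.head hl, hS, chainAuxHead l hc _ hmem hl⟩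
    · exact ⟨l.getLast hl, hT, chainAuxLast l hc _ hmem hl⟩
  · rintro ⟨g, hg, u, w, hr, hlab, hhu, _⟩
    apply hhead
    rw [hVN]
    right
    exact ⟨g, hg, u, w, hr, hlab, hhu⟩
end

section
/- Let V be a type, r : V → V → Prop, and S, T sets of vertices; let V^N = {v | (∃ s ∈ S, s →* v) ∧ (∃ t ∈ T, v →* t)}, and define the restricted edge relation r' by r' u v ↔ (r u v ∧ u ∈ V^N ∧ v ∈ V^N). Then for every s ∈ S and t ∈ T: Relation.ReflTransGen r s t holds if and only if Relation.ReflTransGen r' s t holds. -/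
/-- Pruning the graph to edges between necessary vertices preserves exactly
the source-to-sink reachability relation. -/
theorem prune_preserves_source_sink_reachability {V : Type*}
    (r : V → V → Prop) (S T : Set V) (VN : Set V)
    (hVN : VN = {v | (∃ s ∈ S, Relation.ReflTransGen r s v) ∧
                     (∃ t ∈ T, Relation.ReflTransGen r v t)})
    (r' : V → V → Prop)
    (hr' : ∀ u v, r' u v ↔ (r u v ∧ u ∈ VN ∧ v ∈ VN)) :
    ∀ s ∈ S, ∀ t ∈ T,
      (Relation.ReflTransGen r s t ↔ Relation.ReflTransGen r' s t) := by
  subst hVN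
  intro s hs t ht
  constructor
  · intro h
    have key : ∀ a, Relation.ReflTransGen r a t →
        (∃ s' ∈ S, Relation.ReflTransGen r s' a) →
        Relation.ReflTransGen r' a t := by
      intro a hat
      induction hat using Relation.ReflTransGen.head_induction_on with
      | refl => intro _; exact Relation.ReflTransGen.refl
      | head hab hbt ih =>
        rename_i a b
        rintro ⟨s', hs', hsa⟩
        have hsb : Relation.ReflTransGen r s' b := hsa.tail hab
        have hab' : r' a b := by
          rw [hr']
          exact ⟨hab, ⟨⟨s', hs', hsa⟩, ⟨t, ht, Relation.ReflTransGen.head hab hbt⟩⟩,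
            ⟨⟨s', hs', hsb⟩, ⟨t, ht, hbt⟩⟩⟩
        exact Relation.ReflTransGen.head hab' (ih ⟨s', hs', hsb⟩)
    exact key s h ⟨s, hs, Relation.ReflTransGen.refl⟩
  · intro h
    exact Relation.ReflTransGen.mono (fun u v huv => ((hr' u v).mp huv).1) _ _ h
end
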